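/- For fixed k and fixed V, the canonical expectation ⟨exp(−λN_k)⟩_V^C(n/V) of the perfect Bose gas is monotonically decreasing in n for each λ > 0; i.e. ⟨exp(−λN_k)⟩ at n+1 particles is ≤ that at n particles. -/

import Mathlib

set_option maxHeartbeats 1000000


/-- Canonical partition function of the perfect Bose gas: the sum over occupation
sequences (finitely supported functions ℕ → ℕ) with total particle number n of the
Boltzmann weight exp(-β Σ_k n_k E_k). -/
noncomputable def Zcan (β : ℝ) (E : ℕ → ℝ) (n : ℕ) : ℝ :=
  ∑' f : {f : ℕ →₀ ℕ // f.sum (fun _ m => m) = n},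
    Real.exp (-β * (f : ℕ →₀ ℕ).sum (fun k m => (m : ℝ) * E k))
/-- Canonical expectation of g(N_k) in the n-particle perfect Bose gas. -/
noncomputable def canExp (β : ℝ) (E : ℕ → ℝ) (n k : ℕ) (g : ℕ → ℝ) : ℝ :=
  (Zcan β E n)⁻¹ * ∑' f : {f : ℕ →₀ ℕ // f.sum (fun _ m => m) = n},
    g ((f : ℕ →₀ ℕ) k) * Real.exp (-β * (f : ℕ →₀ ℕ).sum (fun j m => (m : ℝ) * E j))



open Finset Filter

/-- Boltzmann weight as a product. -/
noncomputable def Wb (q : ℕ → ℝ) (f : ℕ →₀ ℕ) : ℝ := f.prod fun i m => q i ^ m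

/-- Partition function. -/
noncomputable def Zb (q : ℕ → ℝ) (n : ℕ) : ℝ :=
  ∑' f : {f : ℕ →₀ ℕ // f.sum (fun _ m => m) = n}, Wb q (f : ℕ →₀ ℕ)

/-- weighted sum with occupation weight `g (f k)`. -/
noncomputable def Zw (q : ℕ → ℝ) (k : ℕ) (g : ℕ → ℝ) (n : ℕ) : ℝ :=
  ∑' f : {f : ℕ →₀ ℕ // f.sum (fun _ m => m) = n}, g ((f : ℕ →₀ ℕ) k) * Wb q (f : ℕ →₀ ℕ)

lemma Wb_nonneg {q : ℕ → ℝ} (hq : ∀ i, 0 ≤ q i) (f : ℕ →₀ ℕ) : 0 ≤ Wb q f :=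
  Finset.prod_nonneg fun i _ => pow_nonneg (hq i) _

lemma summable_pi_prod {q : ℕ → ℝ} (hq0 : ∀ i, 0 ≤ q i) (hq : Summable q) :
    ∀ n : ℕ, Summable fun a : Fin n → ℕ => ∏ i, q (a i) := by
  intro n
  induction n with
  | zero => exact Summable.of_finite
  | succ n ih =>
      have h : Summable fun p : ℕ × (Fin n → ℕ) => q p.1 * ∏ i, q (p.2 i) := by
        apply Summable.mul_of_nonneg hq ih
        · exact Pi.le_def.mpr fun i => hq0 i
        · exact Pi.le_def.mpr fun a => Finset.prod_nonneg fun i _ => hq0 (a i)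
      have h2 := h.comp_injective (Fin.consEquiv fun _ => ℕ).symm.injective
      have : ((fun p : ℕ × (Fin n → ℕ) => q p.1 * ∏ i, q (p.2 i)) ∘ (Fin.consEquiv fun _ => ℕ).symm)
          = fun a : Fin (n+1) → ℕ => ∏ i, q (a i) := by
        funext a
        simp [Fin.consEquiv, Fin.tail, Fin.prod_univ_succ]
      rwa [this] at h2

/-- weight under the sorted-list embedding. -/
lemma Wb_eq_prod_multiset (q : ℕ → ℝ) (f : ℕ →₀ ℕ) :
    Wb q f = (f.toMultiset.map q).prod := by
  rw [Finsupp.toMultiset_map, Finsupp.prod_toMultiset, Finsupp.prod_mapDomain_index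
    (fun b => pow_zero b) (fun b m₁ m₂ => pow_add b m₁ m₂)]
  rfl

lemma summable_Wb {q : ℕ → ℝ} (hq0 : ∀ i, 0 ≤ q i) (hq : Summable q) (n : ℕ) :
    Summable fun f : {f : ℕ →₀ ℕ // f.sum (fun _ m => m) = n} => Wb q (f : ℕ →₀ ℕ) := by
  classical
  set G : (Fin n → ℕ) → ℝ := fun a => ∏ i, q (a i) with hG
  have hGsum := summable_pi_prod hq0 hq n
  -- the embedding
  have hlen : ∀ f : {f : ℕ →₀ ℕ // f.sum (fun _ m => m) = n},
      (Multiset.sort (f : ℕ →₀ ℕ).toMultiset (· ≤ ·)).length = n := by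
    intro f
    rw [Multiset.length_sort, Finsupp.card_toMultiset]
    exact f.2
  set ι : {f : ℕ →₀ ℕ // f.sum (fun _ m => m) = n} → (Fin n → ℕ) :=
    fun f i => (Multiset.sort (f : ℕ →₀ ℕ).toMultiset (· ≤ ·)).get ((Fin.cast (hlen f).symm) i)
    with hι
  have hinj : Function.Injective ι := by
    intro f g hfg
    have hl : Multiset.sort (f : ℕ →₀ ℕ).toMultiset (· ≤ ·)
        = Multiset.sort (g : ℕ →₀ ℕ).toMultiset (· ≤ ·) := by
      apply List.ext_get (by rw [hlen f, hlen g])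
      intro i h1 h2
      have := congrFun hfg ⟨i, (hlen f) ▸ h1⟩
      simpa [hι] using this
    have hm : (f : ℕ →₀ ℕ).toMultiset = (g : ℕ →₀ ℕ).toMultiset := by
      rw [← Multiset.sort_eq (f : ℕ →₀ ℕ).toMultiset (· ≤ ·),
        ← Multiset.sort_eq (g : ℕ →₀ ℕ).toMultiset (· ≤ ·), hl]
    have : (f : ℕ →₀ ℕ) = (g : ℕ →₀ ℕ) := by
      have := congrArg Multiset.toFinsupp hm
      simpa using this
    exact Subtype.ext this
  have hval : (G ∘ ι) = fun f : {f : ℕ →₀ ℕ // f.sum (fun _ m => m) = n} =>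
      Wb q (f : ℕ →₀ ℕ) := by
    funext f
    rw [Wb_eq_prod_multiset]
    set l := Multiset.sort (f : ℕ →₀ ℕ).toMultiset (· ≤ ·) with hldef
    have hms : (f : ℕ →₀ ℕ).toMultiset = ↑l := (Multiset.sort_eq _ _).symm
    rw [hms]
    have h1 : (Multiset.map q ↑l).prod = (l.map q).prod := by norm_cast
    rw [h1, ← List.ofFn_get l, List.map_ofFn, List.prod_ofFn]
    show ∏ i : Fin n, q (l.get (Fin.cast (hlen f).symm i)) = _
    rw [Fin.prod_congr' (fun i => q (l.get i)) (hlen f).symm]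
    simp [List.ofFn_get]
  rw [← hval]
  exact hGsum.comp_injective hinj

section Split
variable {q : ℕ → ℝ}

abbrev Cfg (n : ℕ) := {f : ℕ →₀ ℕ // f.sum (fun _ m => m) = n}

lemma tot_add (f g : ℕ →₀ ℕ) :
    (f + g).sum (fun _ m => m) = f.sum (fun _ m => m) + g.sum (fun _ m => m) :=
  Finsupp.sum_add_index' (fun _ => rfl) (fun _ _ _ => rfl)

lemma tot_single (a b : ℕ) :
    (Finsupp.single a b).sum (fun _ m => m) = b :=
  Finsupp.sum_single_index rfl

lemma tot_erase_add (k : ℕ) (f : ℕ →₀ ℕ) :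
    (Finsupp.erase k f).sum (fun _ m => m) + f k = f.sum (fun _ m => m) := by
  conv_rhs => rw [← Finsupp.erase_add_single k f]
  rw [tot_add, tot_single]

lemma apply_le_tot (k : ℕ) (f : ℕ →₀ ℕ) : f k ≤ f.sum (fun _ m => m) := by
  rw [← tot_erase_add k f]; omega

/-- fiber equivalence: configurations with `f k = j` correspond to configurations of
`n - j` particles avoiding `k`. -/
noncomputable def fiberEquiv (k n : ℕ) (j : Fin (n+1)) :
    {f : Cfg n // (f : ℕ →₀ ℕ) k = (j : ℕ)} ≃
      {x : Cfg (n - (j : ℕ)) // (x : ℕ →₀ ℕ) k = 0} where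
  toFun f :=
    ⟨⟨Finsupp.erase k f.1.1, by
        have := tot_erase_add k f.1.1
        rw [f.1.2, f.2] at this; omega⟩, Finsupp.erase_same⟩
  invFun x :=
    ⟨⟨x.1.1 + Finsupp.single k (j : ℕ), by
        rw [tot_add, tot_single, x.1.2]
        have := j.2; omega⟩, by
      rw [Finsupp.add_apply, x.2, Finsupp.single_eq_same, Nat.zero_add]⟩
  left_inv f := by
    apply Subtype.ext; apply Subtype.ext
    simp only
    conv_rhs => rw [← Finsupp.erase_add_single k f.1.1]
    rw [f.2]
  right_inv x := by
    apply Subtype.ext; apply Subtype.ext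
    simp only
    ext i
    rcases eq_or_ne i k with rfl | hik
    · rw [Finsupp.erase_same, x.2]
    · rw [Finsupp.erase_ne hik, Finsupp.add_apply,
        Finsupp.single_apply, if_neg (fun h => hik h.symm), Nat.add_zero]

/-- splitting a configuration into its `k`-occupation and the rest. -/
noncomputable def splitEquiv (k n : ℕ) :
    Cfg n ≃ Σ j : Fin (n+1), {x : Cfg (n - (j : ℕ)) // (x : ℕ →₀ ℕ) k = 0} :=
  ((Equiv.sigmaFiberEquiv (fun f : Cfg n =>
      (⟨f.1 k, Nat.lt_succ_of_le (by have := apply_le_tot k f.1; rw [f.2] at this; exact this)⟩ : Fin (n+1)))).symm.trans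
    (Equiv.sigmaCongrRight fun j => (Equiv.subtypeEquivRight (fun f => by simp [Fin.ext_iff])).trans (fiberEquiv k n j)))

lemma splitEquiv_symm_apply (k n : ℕ) (j : Fin (n+1))
    (x : {x : Cfg (n - (j : ℕ)) // (x : ℕ →₀ ℕ) k = 0}) :
    (((splitEquiv k n).symm ⟨j, x⟩ : Cfg n) : ℕ →₀ ℕ)
      = x.1.1 + Finsupp.single k (j : ℕ) := by
  simp [splitEquiv, Equiv.sigmaCongrRight, fiberEquiv, Equiv.sigmaFiberEquiv]

lemma Wb_add_single {k : ℕ} {c : ℕ →₀ ℕ} (j : ℕ) :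
    Wb q (c + Finsupp.single k j) = Wb q c * q k ^ j := by
  unfold Wb
  rw [Finsupp.prod_add_index' (fun a => pow_zero (q a)) (fun a m₁ m₂ => pow_add (q a) m₁ m₂),
    Finsupp.prod_single_index (h := fun i m => q i ^ m) (pow_zero (q k))]

lemma Wb_update_zero {k : ℕ} {c : ℕ →₀ ℕ} (hc : c k = 0) :
    Wb (Function.update q k 0) c = Wb q c := by
  unfold Wb
  apply Finsupp.prod_congr
  intro x hx
  have hxk : x ≠ k := by
    intro h; subst h
    exact (Finsupp.mem_support_iff.1 hx) hc
  rw [Function.update_of_ne hxk]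

lemma Wb_update_zero_eq_zero {k : ℕ} {h : ℕ →₀ ℕ} (hk : h k ≠ 0) :
    Wb (Function.update q k 0) h = 0 := by
  unfold Wb
  apply Finset.prod_eq_zero (Finsupp.mem_support_iff.2 hk)
  show Function.update q k 0 k ^ h k = 0
  rw [Function.update_self]
  exact zero_pow hk

lemma Zb_restrict (q : ℕ → ℝ) (k m : ℕ) :
    ∑' x : {x : Cfg m // (x : ℕ →₀ ℕ) k = 0}, Wb (Function.update q k 0) x.1.1
      = Zb (Function.update q k 0) m := by
  have hsupp : Function.support (fun f : Cfg m => Wb (Function.update q k 0) f.1)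
      ⊆ {x : Cfg m | (x : ℕ →₀ ℕ) k = 0} := by
    intro f hf
    by_contra hk
    exact hf (Wb_update_zero_eq_zero hk)
  exact tsum_subtype_eq_of_support_subset hsupp

lemma Zw_split {q : ℕ → ℝ} (hq0 : ∀ i, 0 ≤ q i) (hq : Summable q) {g : ℕ → ℝ}
    (hg0 : ∀ m, 0 ≤ g m) (hg1 : ∀ m, g m ≤ 1) (k n : ℕ) :
    Zw q k g n = ∑ j ∈ Finset.range (n+1),
      g j * q k ^ j * Zb (Function.update q k 0) (n - j) := by
  classical
  have hw := summable_Wb hq0 hq n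
  have hs : Summable (fun f : Cfg n => g (f.1 k) * Wb q f.1) :=
    Summable.of_nonneg_of_le (fun f => mul_nonneg (hg0 _) (Wb_nonneg hq0 _))
      (fun f => mul_le_of_le_one_left (Wb_nonneg hq0 _) (hg1 _)) hw
  have hfun : (fun p : (Σ j : Fin (n+1), {x : Cfg (n - (j : ℕ)) // (x : ℕ →₀ ℕ) k = 0}) =>
        g (((((splitEquiv k n).symm p) : Cfg n) : ℕ →₀ ℕ) k)
          * Wb q ((((splitEquiv k n).symm p) : Cfg n) : ℕ →₀ ℕ))
      = fun p => g ((p.1 : ℕ)) * (q k ^ (p.1 : ℕ) * Wb (Function.update q k 0) p.2.1.1) := by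
    funext p
    obtain ⟨j, x⟩ := p
    rw [splitEquiv_symm_apply, Wb_add_single, Wb_update_zero x.2]
    have harg : (x.1.1 + Finsupp.single k (j : ℕ)) k = (j : ℕ) := by
      rw [Finsupp.add_apply, x.2, Finsupp.single_eq_same, Nat.zero_add]
    rw [harg]
    ring
  have hsum2 : Summable (fun p : (Σ j : Fin (n+1), {x : Cfg (n - (j : ℕ)) // (x : ℕ →₀ ℕ) k = 0}) =>
      g ((p.1 : ℕ)) * (q k ^ (p.1 : ℕ) * Wb (Function.update q k 0) p.2.1.1)) := by
    rw [← hfun]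
    exact hs.comp_injective (splitEquiv k n).symm.injective
  calc Zw q k g n
      = ∑' p : (Σ j : Fin (n+1), {x : Cfg (n - (j : ℕ)) // (x : ℕ →₀ ℕ) k = 0}),
          g (((((splitEquiv k n).symm p) : Cfg n) : ℕ →₀ ℕ) k)
            * Wb q ((((splitEquiv k n).symm p) : Cfg n) : ℕ →₀ ℕ) :=
        (Equiv.tsum_eq (splitEquiv k n).symm
          (fun f : Cfg n => g (f.1 k) * Wb q f.1)).symm
    _ = ∑' p : (Σ j : Fin (n+1), {x : Cfg (n - (j : ℕ)) // (x : ℕ →₀ ℕ) k = 0}),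
          g ((p.1 : ℕ)) * (q k ^ (p.1 : ℕ) * Wb (Function.update q k 0) p.2.1.1) := by
        rw [hfun]
    _ = ∑' j : Fin (n+1), ∑' x : {x : Cfg (n - (j : ℕ)) // (x : ℕ →₀ ℕ) k = 0},
          g ((j : ℕ)) * (q k ^ (j : ℕ) * Wb (Function.update q k 0) x.1.1) :=
        hsum2.tsum_sigma
    _ = ∑ j : Fin (n+1), ∑' x : {x : Cfg (n - (j : ℕ)) // (x : ℕ →₀ ℕ) k = 0},
          g ((j : ℕ)) * (q k ^ (j : ℕ) * Wb (Function.update q k 0) x.1.1) :=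
        tsum_fintype _
    _ = ∑ j : Fin (n+1),
          g ((j : ℕ)) * q k ^ (j : ℕ) * Zb (Function.update q k 0) (n - (j : ℕ)) := by
        apply Finset.sum_congr rfl
        intro j _
        rw [tsum_mul_left, tsum_mul_left, Zb_restrict q k]
        ring
    _ = ∑ j ∈ Finset.range (n+1),
          g j * q k ^ j * Zb (Function.update q k 0) (n - j) :=
        Fin.sum_univ_eq_sum_range
          (fun j => g j * q k ^ j * Zb (Function.update q k 0) (n - j)) (n+1)

section Seq

/-- strong log-concavity of a nonnegative sequence. -/
def LCseq (Z : ℕ → ℝ) : Prop :=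
  (∀ n, 0 ≤ Z n) ∧ ∀ a b : ℕ, a ≤ b → Z a * Z (b+1) ≤ Z (a+1) * Z b

lemma LCseq.glc {Z : ℕ → ℝ} (h : LCseq Z) :
    ∀ (t p r : ℕ), p ≤ r → Z p * Z (r + t) ≤ Z (p + t) * Z r := by
  intro t
  induction t with
  | zero => intro p r _; rw [Nat.add_zero, Nat.add_zero, mul_comm]
  | succ t ih =>
      intro p r hpr
      rcases eq_or_lt_of_le hpr with rfl | hlt
      · rw [mul_comm]
      · have h1 : Z p * Z ((r + t) + 1) ≤ Z (p+1) * Z (r + t) := h.2 p (r + t) (by omega)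
        have h2 : Z (p+1) * Z (r + t) ≤ Z ((p+1) + t) * Z r := ih (p+1) r (by omega)
        have e1 : r + (t+1) = (r + t) + 1 := by omega
        have e2 : p + (t+1) = (p+1) + t := by omega
        rw [e1, e2]
        exact h1.trans h2

/-- convolution with a geometric sequence. -/
noncomputable def TrS (y : ℝ) (A : ℕ → ℝ) (n : ℕ) : ℝ :=
  ∑ j ∈ Finset.range (n+1), y ^ j * A (n - j)

lemma TrS_succ (y : ℝ) (A : ℕ → ℝ) (n : ℕ) :
    TrS y A (n+1) = y * TrS y A n + A (n+1) := by
  unfold TrS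
  rw [Finset.sum_range_succ' (fun j => y ^ j * A (n + 1 - j)) (n+1)]
  have h1 : ∀ j ∈ Finset.range (n+1), y ^ (j+1) * A (n + 1 - (j+1))
      = y * (y ^ j * A (n - j)) := by
    intro j hj
    have : n + 1 - (j+1) = n - j := by omega
    rw [this, pow_succ]
    ring
  rw [Finset.sum_congr rfl h1, ← Finset.mul_sum]
  simp

lemma TrS_zero (y : ℝ) (A : ℕ → ℝ) : TrS y A 0 = A 0 := by
  simp [TrS]

lemma TrS_nonneg {y : ℝ} {A : ℕ → ℝ} (hy : 0 ≤ y) (hA : ∀ n, 0 ≤ A n) (n : ℕ) :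
    0 ≤ TrS y A n :=
  Finset.sum_nonneg fun j _ => mul_nonneg (pow_nonneg hy j) (hA _)

lemma LCseq.trS {y : ℝ} {A : ℕ → ℝ} (hy : 0 ≤ y) (h : LCseq A) : LCseq (TrS y A) := by
  refine ⟨TrS_nonneg hy h.1, ?_⟩
  intro a b hab
  rw [TrS_succ, TrS_succ]
  have key : A (b+1) * TrS y A a ≤ A (a+1) * TrS y A b := by
    unfold TrS
    rw [Finset.mul_sum, Finset.mul_sum]
    have h1 : ∑ j ∈ Finset.range (a+1), A (b+1) * (y ^ j * A (a - j))
        ≤ ∑ j ∈ Finset.range (a+1), A (a+1) * (y ^ j * A (b - j)) := by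
      apply Finset.sum_le_sum
      intro j hj
      have hja : j ≤ a := by
        simpa [Nat.lt_succ_iff] using hj
      have hglc := h.glc (j+1) (a - j) (b - j) (by omega)
      have e1 : (b - j) + (j+1) = b + 1 := by omega
      have e2 : (a - j) + (j+1) = a + 1 := by omega
      rw [e1, e2] at hglc
      have := mul_le_mul_of_nonneg_left hglc (pow_nonneg hy j)
      nlinarith [this]
    apply h1.trans
    apply Finset.sum_le_sum_of_subset_of_nonneg
    · exact Finset.range_subset_range.2 (by omega)
    · intro j _ _
      exact mul_nonneg (h.1 _) (mul_nonneg (pow_nonneg hy j) (h.1 _))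
  nlinarith [key]

/-- partial geometric sums of a sequence. -/
noncomputable def Vs (x : ℝ) (Z : ℕ → ℝ) (n : ℕ) : ℝ :=
  ∑ m ∈ Finset.range (n+1), x ^ (n - m) * Z m

lemma Vs_succ (x : ℝ) (Z : ℕ → ℝ) (n : ℕ) :
    Vs x Z (n+1) = x * Vs x Z n + Z (n+1) := by
  unfold Vs
  rw [Finset.sum_range_succ (fun m => x ^ (n + 1 - m) * Z m) (n+1)]
  have h1 : ∀ m ∈ Finset.range (n+1), x ^ (n + 1 - m) * Z m
      = x * (x ^ (n - m) * Z m) := by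
    intro m hm
    have hm' : m ≤ n := by simpa [Nat.lt_succ_iff] using hm
    have : n + 1 - m = (n - m) + 1 := by omega
    rw [this, pow_succ]
    ring
  rw [Finset.sum_congr rfl h1, ← Finset.mul_sum]
  simp

lemma Vs_nonneg {x : ℝ} {Z : ℕ → ℝ} (hx : 0 ≤ x) (hZ : ∀ n, 0 ≤ Z n) (n : ℕ) :
    0 ≤ Vs x Z n :=
  Finset.sum_nonneg fun m _ => mul_nonneg (pow_nonneg hx _) (hZ m)

lemma key_ineq {x : ℝ} {Z : ℕ → ℝ} (hx : 0 ≤ x) (hZ : LCseq Z) (hZpos : ∀ n, 0 < Z n) :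
    ∀ n, Vs x Z n * (Z (n+1) - x * Z n) ≤ Z n * Z (n+1) := by
  intro n
  induction n with
  | zero =>
      have : Vs x Z 0 = Z 0 := by simp [Vs]
      rw [this]
      nlinarith [mul_nonneg (mul_nonneg hx (hZpos 0).le) (hZpos 0).le]
  | succ n ih =>
      have hlc : Z n * Z (n+2) ≤ Z (n+1) * Z (n+1) := hZ.2 n (n+1) (by omega)
      have hV0 : 0 ≤ Vs x Z n := Vs_nonneg hx hZ.1 n
      have step1 : Z (n+1) * (Z (n+2) - x * Z (n+1)) ≤ Z (n+2) * (Z (n+1) - x * Z n) := by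
        nlinarith [hlc, hx]
      have hA : Vs x Z n * (Z (n+2) - x * Z (n+1)) ≤ Z n * Z (n+2) := by
        have h1 : (Vs x Z n * (Z (n+2) - x * Z (n+1))) * Z (n+1)
            ≤ (Z n * Z (n+2)) * Z (n+1) := by
          have m1 := mul_le_mul_of_nonneg_left step1 hV0
          have m2 := mul_le_mul_of_nonneg_left ih (hZpos (n+2)).le
          nlinarith [m1, m2]
        exact le_of_mul_le_mul_right h1 (hZpos (n+1))
      rw [Vs_succ]
      have hA2 : Vs x Z n * (Z (n+2) - x * Z (n+1)) ≤ Z (n+1) * Z (n+1) :=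
        hA.trans hlc
      nlinarith [mul_le_mul_of_nonneg_left hA2 hx]

lemma V_mono {x : ℝ} {Z : ℕ → ℝ} (hx : 0 ≤ x) (hZ : LCseq Z) (hZpos : ∀ n, 0 < Z n)
    (n : ℕ) : Vs x Z n * Z (n+1) ≤ Vs x Z (n+1) * Z n := by
  have h := key_ineq hx hZ hZpos n
  rw [Vs_succ]
  nlinarith [h]

lemma TrS_sub (x c : ℝ) (A : ℕ → ℝ) :
    ∀ n, TrS x A n = c * TrS (c*x) A n - (c - 1) * Vs x (TrS (c*x) A) n := by
  intro n
  induction n with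
  | zero =>
      have h1 : Vs x (TrS (c*x) A) 0 = A 0 := by simp [Vs, TrS_zero]
      rw [TrS_zero, TrS_zero, h1]
      ring
  | succ n ih =>
      rw [TrS_succ, TrS_succ, Vs_succ, TrS_succ, ih]
      ring

lemma main_abstract (x c : ℝ) (hx : 0 ≤ x) (hc : 1 ≤ c) (A : ℕ → ℝ)
    (hZ : LCseq (TrS (c*x) A)) (hZpos : ∀ n, 0 < TrS (c*x) A n) (n : ℕ) :
    TrS x A (n+1) * TrS (c*x) A n ≤ TrS x A n * TrS (c*x) A (n+1) := by
  have hmono := V_mono hx hZ hZpos n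
  rw [TrS_sub x c A (n+1), TrS_sub x c A n]
  nlinarith [mul_le_mul_of_nonneg_left hmono (sub_nonneg.2 hc)]

end Seq

section Trunc

/-- truncation of the weight sequence. -/
noncomputable def truncq (q : ℕ → ℝ) (N : ℕ) : ℕ → ℝ := fun i => if i < N then q i else 0

lemma truncq_nonneg {q : ℕ → ℝ} (hq0 : ∀ i, 0 ≤ q i) (N : ℕ) (i : ℕ) :
    0 ≤ truncq q N i := by
  unfold truncq; split_ifs
  · exact hq0 i
  · exact le_refl 0

lemma truncq_le {q : ℕ → ℝ} (hq0 : ∀ i, 0 ≤ q i) (N : ℕ) (i : ℕ) :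
    truncq q N i ≤ q i := by
  unfold truncq; split_ifs
  · exact le_refl _
  · exact hq0 i

lemma truncq_summable {q : ℕ → ℝ} (hq0 : ∀ i, 0 ≤ q i) (hq : Summable q) (N : ℕ) :
    Summable (truncq q N) :=
  Summable.of_nonneg_of_le (truncq_nonneg hq0 N) (truncq_le hq0 N) hq

lemma Wb_truncq_of_lt {q : ℕ → ℝ} {N : ℕ} {f : ℕ →₀ ℕ}
    (h : ∀ i ∈ f.support, i < N) : Wb (truncq q N) f = Wb q f := by
  unfold Wb
  apply Finsupp.prod_congr
  intro x hx
  have := h x hx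
  unfold truncq
  rw [if_pos this]

lemma Wb_truncq_of_ge {q : ℕ → ℝ} {N : ℕ} {f : ℕ →₀ ℕ} {i : ℕ}
    (hi : i ∈ f.support) (h : ¬ i < N) : Wb (truncq q N) f = 0 := by
  unfold Wb
  apply Finset.prod_eq_zero hi
  show truncq q N i ^ f i = 0
  unfold truncq
  rw [if_neg h]
  exact zero_pow (Finsupp.mem_support_iff.1 hi)

lemma Wb_truncq_le_q {q : ℕ → ℝ} (hq0 : ∀ i, 0 ≤ q i) (N : ℕ) (f : ℕ →₀ ℕ) :
    Wb (truncq q N) f ≤ Wb q f := by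
  by_cases h : ∀ i ∈ f.support, i < N
  · rw [Wb_truncq_of_lt h]
  · push_neg at h
    obtain ⟨i, hi, hiN⟩ := h
    rw [Wb_truncq_of_ge hi (not_lt.2 hiN)]
    exact Wb_nonneg hq0 f

lemma Wb_truncq_mono {q : ℕ → ℝ} (hq0 : ∀ i, 0 ≤ q i) {N N' : ℕ} (hNN' : N ≤ N')
    (f : ℕ →₀ ℕ) : Wb (truncq q N) f ≤ Wb (truncq q N') f := by
  by_cases h : ∀ i ∈ f.support, i < N
  · rw [Wb_truncq_of_lt h, Wb_truncq_of_lt (fun i hi => lt_of_lt_of_le (h i hi) hNN')]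
  · push_neg at h
    obtain ⟨i, hi, hiN⟩ := h
    rw [Wb_truncq_of_ge hi (not_lt.2 hiN)]
    exact Wb_nonneg (truncq_nonneg hq0 N') f

lemma Zb_truncq_le {q : ℕ → ℝ} (hq0 : ∀ i, 0 ≤ q i) (hq : Summable q) (N m : ℕ) :
    Zb (truncq q N) m ≤ Zb q m :=
  Summable.tsum_le_tsum (fun f => Wb_truncq_le_q hq0 N f.1)
    (summable_Wb (truncq_nonneg hq0 N) (truncq_summable hq0 hq N) m)
    (summable_Wb hq0 hq m)

lemma Zb_truncq_mono {q : ℕ → ℝ} (hq0 : ∀ i, 0 ≤ q i) (hq : Summable q) (m : ℕ) :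
    Monotone (fun N => Zb (truncq q N) m) := by
  intro N N' hNN'
  exact Summable.tsum_le_tsum (fun f => Wb_truncq_mono hq0 hNN' f.1)
    (summable_Wb (truncq_nonneg hq0 N) (truncq_summable hq0 hq N) m)
    (summable_Wb (truncq_nonneg hq0 N') (truncq_summable hq0 hq N') m)

lemma Zb_truncq_tendsto {q : ℕ → ℝ} (hq0 : ∀ i, 0 ≤ q i) (hq : Summable q) (m : ℕ) :
    Filter.Tendsto (fun N => Zb (truncq q N) m) Filter.atTop (nhds (Zb q m)) := by
  have hmono := Zb_truncq_mono hq0 hq m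
  have hbdd : ∀ N, Zb (truncq q N) m ≤ Zb q m := fun N => Zb_truncq_le hq0 hq N m
  have hbdd' : BddAbove (Set.range fun N => Zb (truncq q N) m) := by
    refine ⟨Zb q m, ?_⟩
    rintro _ ⟨N, rfl⟩
    exact hbdd N
  have htend := tendsto_atTop_ciSup hmono hbdd'
  have hsup : ⨆ N, Zb (truncq q N) m = Zb q m := by
    apply le_antisymm (ciSup_le hbdd)
    have hhs : HasSum (fun f : Cfg m => Wb q f.1) (Zb q m) :=
      (summable_Wb hq0 hq m).hasSum
    refine le_of_tendsto hhs ?_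
    filter_upwards with s
    set N := (s.sup fun f : Cfg m => f.1.support.sup id) + 1 with hN
    have hNlt : ∀ f ∈ s, ∀ i ∈ (f : Cfg m).1.support, i < N := by
      intro f hf i hi
      have h1 : i ≤ f.1.support.sup id := Finset.le_sup (f := id) hi
      have h2 : f.1.support.sup id ≤ s.sup (fun f : Cfg m => f.1.support.sup id) :=
        Finset.le_sup (f := fun f : Cfg m => f.1.support.sup id) hf
      omega
    have heq : ∑ f ∈ s, Wb q f.1 = ∑ f ∈ s, Wb (truncq q N) f.1 :=
      Finset.sum_congr rfl (fun f hf => (Wb_truncq_of_lt (hNlt f hf)).symm)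
    rw [heq]
    have h1 : ∑ f ∈ s, Wb (truncq q N) f.1 ≤ Zb (truncq q N) m :=
      Summable.sum_le_tsum s (fun f _ => Wb_nonneg (truncq_nonneg hq0 N) f.1)
        (summable_Wb (truncq_nonneg hq0 N) (truncq_summable hq0 hq N) m)
    exact h1.trans (le_ciSup hbdd' N)
  rwa [hsup] at htend

/-- the delta sequence. -/
noncomputable def Dseq : ℕ → ℝ := fun n => if n = 0 then 1 else 0

lemma LCseq_Dseq : LCseq Dseq := by
  constructor
  · intro n; unfold Dseq; split_ifs <;> norm_num
  · intro a b _
    have h1 : Dseq (b+1) = 0 := by unfold Dseq; rw [if_neg (Nat.succ_ne_zero b)]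
    rw [h1, mul_zero]
    apply mul_nonneg <;> (unfold Dseq; split_ifs <;> norm_num)

lemma Zb_zero_fun (n : ℕ) : Zb (fun _ => 0) n = Dseq n := by
  have hW : ∀ f : ℕ →₀ ℕ, Wb (fun _ => (0:ℝ)) f = if f = 0 then 1 else 0 := by
    intro f
    rcases eq_or_ne f 0 with rfl | hf
    · rw [if_pos rfl]
      exact Finsupp.prod_zero_index
    · rw [if_neg hf]
      obtain ⟨i, hi⟩ := Finsupp.support_nonempty_iff.2 hf
      exact Finset.prod_eq_zero hi (zero_pow (Finsupp.mem_support_iff.1 hi))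
  rcases eq_or_ne n 0 with rfl | hn
  · unfold Zb Dseq
    rw [tsum_eq_single (⟨0, Finsupp.sum_zero_index⟩ : Cfg 0)]
    · rw [hW, if_pos rfl, if_pos rfl]
    · intro f hf
      rw [hW, if_neg]
      intro h0
      exact hf (Subtype.ext h0)
  · unfold Zb Dseq
    rw [if_neg hn]
    have : ∀ f : Cfg n, Wb (fun _ => (0:ℝ)) f.1 = 0 := by
      intro f
      rw [hW, if_neg]
      intro h0
      apply hn
      rw [← f.2, h0, Finsupp.sum_zero_index]
    rw [tsum_congr this, tsum_zero]

lemma truncq_zero (q : ℕ → ℝ) : truncq q 0 = fun _ => 0 := by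
  funext i; unfold truncq; rw [if_neg (Nat.not_lt_zero i)]

lemma truncq_succ_update (q : ℕ → ℝ) (N : ℕ) :
    Function.update (truncq q (N+1)) N 0 = truncq q N := by
  funext i
  rcases eq_or_ne i N with rfl | hiN
  · rw [Function.update_self]
    unfold truncq
    rw [if_neg (lt_irrefl i)]
  · rw [Function.update_of_ne hiN]
    unfold truncq
    rcases lt_or_ge i N with h | h
    · rw [if_pos h, if_pos (by omega)]
    · rw [if_neg (by omega), if_neg (by omega)]

lemma Zb_eq_Zw (q : ℕ → ℝ) (k n : ℕ) : Zb q n = Zw q k (fun _ => 1) n :=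
  tsum_congr fun f => (one_mul _).symm

lemma Zb_split {q : ℕ → ℝ} (hq0 : ∀ i, 0 ≤ q i) (hq : Summable q) (k n : ℕ) :
    Zb q n = TrS (q k) (Zb (Function.update q k 0)) n := by
  rw [Zb_eq_Zw q k n, Zw_split hq0 hq (fun m => le_refl (0:ℝ) |>.trans zero_le_one) (fun m => le_refl 1) k n]
  unfold TrS
  apply Finset.sum_congr rfl
  intro j _
  rw [one_mul]

lemma LCseq_Zb_truncq {q : ℕ → ℝ} (hq0 : ∀ i, 0 ≤ q i) (hq : Summable q) :
    ∀ N, LCseq (Zb (truncq q N)) := by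
  intro N
  induction N with
  | zero =>
      have h : Zb (truncq q 0) = Dseq := by
        funext n; rw [truncq_zero, Zb_zero_fun]
      rw [h]; exact LCseq_Dseq
  | succ N ih =>
      have hsplit : Zb (truncq q (N+1)) = TrS (truncq q (N+1) N) (Zb (truncq q N)) := by
        funext n
        rw [Zb_split (truncq_nonneg hq0 (N+1)) (truncq_summable hq0 hq (N+1)) N n,
          truncq_succ_update]
      rw [hsplit]
      exact ih.trS (truncq_nonneg hq0 _ _)

lemma LCseq_Zb {q : ℕ → ℝ} (hq0 : ∀ i, 0 ≤ q i) (hq : Summable q) : LCseq (Zb q) := by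
  constructor
  · intro n; exact tsum_nonneg fun f => Wb_nonneg hq0 f.1
  · intro a b hab
    have h1 := (Zb_truncq_tendsto hq0 hq a).mul (Zb_truncq_tendsto hq0 hq (b+1))
    have h2 := (Zb_truncq_tendsto hq0 hq (a+1)).mul (Zb_truncq_tendsto hq0 hq b)
    exact le_of_tendsto_of_tendsto' h1 h2 (fun N => (LCseq_Zb_truncq hq0 hq N).2 a b hab)

lemma Zb_pos {q : ℕ → ℝ} (hq0 : ∀ i, 0 < q i) (hq : Summable q) (n : ℕ) : 0 < Zb q n := by
  have hle := Summable.le_tsum (summable_Wb (fun i => (hq0 i).le) hq n)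
    (⟨Finsupp.single 0 n, tot_single 0 n⟩ : Cfg n)
    (fun f _ => Wb_nonneg (fun i => (hq0 i).le) f.1)
  have hW : Wb q (Finsupp.single 0 n) = q 0 ^ n :=
    Finsupp.prod_single_index (h := fun i m => q i ^ m) (pow_zero (q 0))
  have : (0:ℝ) < q 0 ^ n := pow_pos (hq0 0) n
  calc (0:ℝ) < q 0 ^ n := this
    _ = Wb q (Finsupp.single 0 n) := hW.symm
    _ ≤ Zb q n := hle

end Trunc
end Split

lemma exp_bridge (β : ℝ) (E : ℕ → ℝ) (f : ℕ →₀ ℕ) :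
    Real.exp (-β * f.sum (fun j m => (m : ℝ) * E j))
      = Wb (fun i => Real.exp (-β * E i)) f := by
  unfold Wb Finsupp.prod
  rw [Finsupp.sum, Finset.mul_sum, Real.exp_sum]
  apply Finset.prod_congr rfl
  intro i _
  show Real.exp (-β * ((f i : ℝ) * E i)) = Real.exp (-β * E i) ^ (f i)
  rw [← Real.exp_nat_mul]
  congr 1
  ring

lemma final_aux {q : ℕ → ℝ} (hq0 : ∀ i, 0 < q i) (hqs : Summable q) (k : ℕ) (lam : ℝ)
    (hlam : 0 < lam) (n : ℕ) :
    Zw q k (fun m => Real.exp (-lam * m)) (n+1) * Zb q n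
      ≤ Zw q k (fun m => Real.exp (-lam * m)) n * Zb q (n+1) := by
  have hq0' : ∀ i, 0 ≤ q i := fun i => (hq0 i).le
  have hg0 : ∀ m : ℕ, 0 ≤ Real.exp (-lam * m) := fun m => (Real.exp_pos _).le
  have hg1 : ∀ m : ℕ, Real.exp (-lam * m) ≤ 1 := by
    intro m
    apply Real.exp_le_one_iff.2
    have h : (0:ℝ) ≤ (m:ℝ) := Nat.cast_nonneg m
    nlinarith
  have hx : 0 ≤ Real.exp (-lam) * q k := mul_nonneg (Real.exp_pos _).le (hq0' k)
  have hc : 1 ≤ Real.exp lam := Real.one_le_exp hlam.le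
  have hcx : Real.exp lam * (Real.exp (-lam) * q k) = q k := by
    rw [← mul_assoc, ← Real.exp_add]
    simp
  have hZeq : ∀ m, Zb q m
      = TrS (Real.exp lam * (Real.exp (-lam) * q k)) (Zb (Function.update q k 0)) m := by
    intro m
    rw [hcx]
    exact Zb_split hq0' hqs k m
  have hNum : ∀ m, Zw q k (fun m => Real.exp (-lam * m)) m
      = TrS (Real.exp (-lam) * q k) (Zb (Function.update q k 0)) m := by
    intro m
    rw [Zw_split hq0' hqs hg0 hg1 k m]
    unfold TrS
    apply Finset.sum_congr rfl
    intro j _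
    have hgj : Real.exp (-lam * (j:ℕ)) = Real.exp (-lam) ^ j := by
      rw [← Real.exp_nat_mul]
      congr 1
      ring
    rw [hgj, mul_pow]
  have hLC : LCseq (TrS (Real.exp lam * (Real.exp (-lam) * q k))
      (Zb (Function.update q k 0))) := by
    have h := LCseq_Zb hq0' hqs
    rwa [funext hZeq] at h
  have hpos : ∀ m, 0 < TrS (Real.exp lam * (Real.exp (-lam) * q k))
      (Zb (Function.update q k 0)) m := by
    intro m
    rw [← hZeq m]
    exact Zb_pos hq0 hqs m
  have hmain := main_abstract (Real.exp (-lam) * q k) (Real.exp lam) hx hc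
    (Zb (Function.update q k 0)) hLC hpos n
  rw [hNum (n+1), hNum n, hZeq (n+1), hZeq n]
  exact hmain

/-- For fixed k, V and λ > 0 the canonical expectation ⟨exp(-λN_k)⟩ is monotonically
decreasing in the particle number n. -/
theorem canExp_laplace_antitone (β : ℝ) (E : ℕ → ℝ) (hβ : 0 < β)
    (hE0 : 0 < E 0) (hE01 : E 0 < E 1) (hEmono : Monotone E)
    (hsum : Summable fun k => Real.exp (-β * E k)) (k : ℕ) (lam : ℝ) (hlam : 0 < lam)
    (n : ℕ) :
    canExp β E (n + 1) k (fun m => Real.exp (-lam * m)) ≤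
      canExp β E n k (fun m => Real.exp (-lam * m)) := by
  have hq0 : ∀ i, 0 < Real.exp (-β * E i) := fun i => Real.exp_pos _
  have hq0' : ∀ i, 0 ≤ Real.exp (-β * E i) := fun i => (hq0 i).le
  have hqs : Summable fun i => Real.exp (-β * E i) := hsum
  have hZcan : ∀ m, Zcan β E m = Zb (fun i => Real.exp (-β * E i)) m := by
    intro m
    exact tsum_congr fun f => exp_bridge β E f.1
  have hcan : ∀ m, canExp β E m k (fun m => Real.exp (-lam * m))
      = (Zb (fun i => Real.exp (-β * E i)) m)⁻¹
        * Zw (fun i => Real.exp (-β * E i)) k (fun m => Real.exp (-lam * m)) m := by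
    intro m
    unfold canExp Zw
    rw [hZcan m, tsum_congr (fun f : Cfg m => by rw [exp_bridge β E f.1])]
  have hZpos : ∀ m, 0 < Zb (fun i => Real.exp (-β * E i)) m :=
    fun m => Zb_pos hq0 hqs m
  rw [hcan (n+1), hcan n, inv_mul_eq_div, inv_mul_eq_div,
    div_le_div_iff₀ (hZpos (n+1)) (hZpos n)]
  exact final_aux hq0 hqs k lam hlam n
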